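/- For all real numbers x and μ, the series Σ_{j=0}^∞ h_j(x) · μ^j / j! converges and equals e^{xμ − μ²/2}. -/

import Mathlib

open Real

open scoped Nat

/-- Probabilists' Hermite polynomial evaluated at a real number. -/
noncomputable def hermiteR (j : ℕ) (x : ℝ) : ℝ := Polynomial.aeval x (Polynomial.hermite j)

open Polynomial Finset in
lemma hermiteR_eq_sum (j : ℕ) (x : ℝ) :
    hermiteR j x = ∑ k ∈ Finset.range (j + 1), ((Polynomial.hermite j).coeff k : ℝ) * x ^ k := by
  have hd : ((Polynomial.hermite j).map (algebraMap ℤ ℝ)).natDegree < j + 1 :=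
    lt_of_le_of_lt natDegree_map_le (by simp [Polynomial.natDegree_hermite])
  rw [hermiteR, aeval_def, eval₂_eq_eval_map, Polynomial.eval_eq_sum_range' hd]
  simp [Polynomial.coeff_map]

lemma two_mul_factorial (m : ℕ) :
    Nat.factorial (2 * m) = 2 ^ m * Nat.factorial m * (2 * m - 1)‼ := by
  induction m with
  | zero => rfl
  | succ m _ =>
    have h := Nat.factorial_eq_mul_doubleFactorial (2 * m + 1)
    rw [(by ring : 2 * (m + 1) = (2 * m + 1) + 1), h,
      (by ring : 2 * m + 1 + 1 = 2 * (m + 1)), Nat.doubleFactorial_two_mul]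
    have : 2 * (m + 1) - 1 = 2 * m + 1 := by omega
    rw [this]

lemma hermite_coeff_div_factorial (m k : ℕ) :
    (((Polynomial.hermite (2 * m + k)).coeff k : ℝ)) / (Nat.factorial (2 * m + k)) =
      (-1 : ℝ) ^ m / (Nat.factorial k * (2 ^ m * Nat.factorial m)) := by
  rw [Polynomial.coeff_hermite_explicit]
  have hch := Nat.choose_mul_factorial_mul_factorial (Nat.le_add_left k (2 * m))
  rw [Nat.add_sub_cancel] at hch
  have hfact : (Nat.factorial (2 * m + k) : ℝ) =
      Nat.choose (2 * m + k) k * Nat.factorial k * Nat.factorial (2 * m) := by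
    exact_mod_cast hch.symm
  have h2m : (Nat.factorial (2 * m) : ℝ) = 2 ^ m * Nat.factorial m * ((2 * m - 1)‼ : ℕ) := by
    exact_mod_cast two_mul_factorial m
  push_cast
  rw [hfact, h2m]
  have hc : (Nat.choose (2 * m + k) k : ℝ) ≠ 0 := by
    exact_mod_cast Nat.choose_pos (Nat.le_add_left k (2 * m)) |>.ne'
  have hd : (((2 * m - 1)‼ : ℕ) : ℝ) ≠ 0 := by exact_mod_cast (Nat.doubleFactorial_pos _).ne'
  have hk : (Nat.factorial k : ℝ) ≠ 0 := by exact_mod_cast (Nat.factorial_pos k).ne'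
  have hm : (Nat.factorial m : ℝ) ≠ 0 := by exact_mod_cast (Nat.factorial_pos m).ne'
  field_simp

/-- The exponential generating function of the Hermite polynomials:
for all real `x` and `μ`, `∑_{j=0}^∞ h_j(x) μ^j / j!` converges and equals `e^{xμ - μ²/2}`. -/
theorem hermite_generating_function (x μ : ℝ) :
    HasSum (fun j : ℕ => hermiteR j x * μ ^ j / (Nat.factorial j))
      (Real.exp (x * μ - μ ^ 2 / 2)) := by
  classical
  set a : ℕ → ℝ := fun k => (x * μ) ^ k / Nat.factorial k with ha_def
  set b : ℕ → ℝ := fun m => (-(μ ^ 2 / 2)) ^ m / Nat.factorial m with hb_def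
  have h1 : HasSum a (Real.exp (x * μ)) := by
    rw [Real.exp_eq_exp_ℝ]; exact NormedSpace.expSeries_div_hasSum_exp (x * μ)
  have h2 : HasSum b (Real.exp (-(μ ^ 2 / 2))) := by
    rw [Real.exp_eq_exp_ℝ]; exact NormedSpace.expSeries_div_hasSum_exp (-(μ ^ 2 / 2))
  have hna : Summable fun k => ‖a k‖ := by
    have := (NormedSpace.expSeries_div_hasSum_exp |x * μ|).summable
    refine this.congr fun k => ?_
    simp [ha_def, abs_div, abs_pow, Nat.abs_cast, abs_mul]
  have hnb : Summable fun m => ‖b m‖ := by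
    have := (NormedSpace.expSeries_div_hasSum_exp |(-(μ ^ 2 / 2))|).summable
    refine this.congr fun m => ?_
    simp [hb_def, abs_div, abs_pow, Nat.abs_cast, abs_mul]
  have hsum : Summable fun p : ℕ × ℕ => a p.1 * b p.2 :=
    summable_mul_of_summable_norm hna hnb
  have hf : HasSum (fun p : ℕ × ℕ => a p.1 * b p.2)
      (Real.exp (x * μ) * Real.exp (-(μ ^ 2 / 2))) := h1.mul h2 hsum
  have hexp : Real.exp (x * μ) * Real.exp (-(μ ^ 2 / 2)) = Real.exp (x * μ - μ ^ 2 / 2) := by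
    rw [← Real.exp_add]; ring_nf
  rw [hexp] at hf
  have hfib := hf.tsum_fiberwise (fun p : ℕ × ℕ => p.1 + 2 * p.2)
  refine HasSum.congr_fun hfib fun j => ?_
  -- compute the fiber sum
  have key : (∑' p : ((fun p : ℕ × ℕ => p.1 + 2 * p.2) ⁻¹' {j}),
        a (p : ℕ × ℕ).1 * b (p : ℕ × ℕ).2)
      = ∑ p ∈ Finset.range (j + 1) ×ˢ Finset.range (j + 1),
          (if p.1 + 2 * p.2 = j then a p.1 * b p.2 else 0) := by
    rw [tsum_subtype ((fun p : ℕ × ℕ => p.1 + 2 * p.2) ⁻¹' {j})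
      (fun p : ℕ × ℕ => a p.1 * b p.2)]
    refine tsum_eq_sum (fun p hp => ?_) |>.trans (Finset.sum_congr rfl fun p _ => ?_)
    · rw [Set.indicator_apply]
      split_ifs with h
      · exfalso
        apply hp
        have : p.1 + 2 * p.2 = j := h
        simp only [Finset.mem_product, Finset.mem_range]
        omega
      · rfl
    · rw [Set.indicator_apply]
      simp only [Set.mem_preimage, Set.mem_singleton_iff]
  rw [key, Finset.sum_product, hermiteR_eq_sum, Finset.sum_mul, Finset.sum_div]
  refine Finset.sum_congr rfl fun k hk => ?_
  have hkj : k ≤ j := by simpa [Nat.lt_succ_iff] using hk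
  by_cases hpar : Even (j - k)
  · obtain ⟨m0, hm0⟩ := hpar
    have hjm : j = 2 * m0 + k := by omega
    subst hjm
    have hm0mem : m0 ∈ Finset.range (2 * m0 + k + 1) := by
      simp only [Finset.mem_range]; omega
    rw [Finset.sum_eq_single_of_mem m0 hm0mem (fun m _ hne => by rw [if_neg]; omega)]
    rw [if_pos (by omega)]
    have hcoeff := hermite_coeff_div_factorial m0 k
    have hj0 : (Nat.factorial (2 * m0 + k) : ℝ) ≠ 0 := by
      exact_mod_cast (Nat.factorial_pos _).ne'
    rw [div_eq_iff hj0] at hcoeff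
    have hμ : (-(μ ^ 2 / 2)) ^ m0 = (-1 : ℝ) ^ m0 * μ ^ (2 * m0) / 2 ^ m0 := by
      rw [show -(μ ^ 2 / 2) = (-1) * μ ^ 2 / 2 by ring, div_pow, mul_pow, ← pow_mul]
    simp only [ha_def, hb_def]
    rw [hcoeff, mul_pow, hμ, pow_add, pow_mul]
    have hk0 : (Nat.factorial k : ℝ) ≠ 0 := by exact_mod_cast (Nat.factorial_pos k).ne'
    have hm0' : (Nat.factorial m0 : ℝ) ≠ 0 := by exact_mod_cast (Nat.factorial_pos m0).ne'
    field_simp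
  · -- odd case: coefficient vanishes and no m works
    rw [Nat.even_iff] at hpar
    have hodd : Odd (j + k) := by rw [Nat.odd_iff]; omega
    rw [Polynomial.coeff_hermite_of_odd_add hodd]
    rw [Finset.sum_eq_zero fun m _ => by rw [if_neg]; omega]
    simp
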